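/- Let J be a finite index set with |J| = n ≥ 2. Then for any two binary hierarchies σ and τ over J, there exists a sequence of binary hierarchies σ = σ₀, σ₁, …, σ_m = τ with each consecutive pair σ_i, σ_{i+1} NNI-adjacent and m ≤ (n − 1)(n − 2)/2. In particular, the NNI-graph on binary hierarchies over J is connected. -/

import Mathlib

open Finset

/-- A binary hierarchy over a finite index set `J`, encoded by its cluster set:
a laminar family of nonempty subsets of `J` containing the root `J` and all
singletons, in which every nonsingleton member is the disjoint union of exactly
two members (its children). -/
structure BinaryHierarchy (J : Type*) [DecidableEq J] [Fintype J] where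
  clusters : Finset (Finset J)
  root_mem : (Finset.univ : Finset J) ∈ clusters
  singleton_mem : ∀ j : J, ({j} : Finset J) ∈ clusters
  nonempty_of_mem : ∀ I ∈ clusters, I.Nonempty
  laminar : ∀ I ∈ clusters, ∀ K ∈ clusters, I ⊆ K ∨ K ⊆ I ∨ Disjoint I K
  binary_split : ∀ I ∈ clusters, 1 < I.card →
    ∃ L ∈ clusters, ∃ R ∈ clusters, Disjoint L R ∧ L ∪ R = I

variable {J : Type*} [DecidableEq J] [Fintype J]

/-- The parent of a cluster `I`: the smallest member of the (laminar) family strictly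
containing `I`, realized as the intersection of all members strictly containing `I`
(these form a chain in a laminar family). -/
def BinaryHierarchy.parent (τ : BinaryHierarchy J) (I : Finset J) : Finset J :=
  (τ.clusters.filter fun K => I ⊂ K).inf id

/-- The sibling (local complement) of a cluster `I`. -/
def BinaryHierarchy.sibling (τ : BinaryHierarchy J) (I : Finset J) : Finset J :=
  τ.parent I \ I

/-- A nearest neighbor interchange move from `τ` to `τ'`: there is a cluster `A ∈ C(τ)`
whose parent `P = Pr(A,τ)` is not the root, with `B := P \ A` and `C := Pr(P,τ) \ P`,
such that `C(τ') = (C(τ) \ {A ∪ B}) ∪ {B ∪ C}`. -/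
def NNIMove (τ τ' : BinaryHierarchy J) : Prop :=
  ∃ A ∈ τ.clusters, τ.parent A ≠ Finset.univ ∧
    τ'.clusters =
      (τ.clusters \ {A ∪ (τ.parent A \ A)}) ∪
        {(τ.parent A \ A) ∪ (τ.parent (τ.parent A) \ τ.parent A)}

/-- Two binary hierarchies are NNI-adjacent if one is obtained from the other by a
single nearest neighbor interchange. -/
def NNIAdjacent (τ τ' : BinaryHierarchy J) : Prop := NNIMove τ τ' ∨ NNIMove τ' τ

namespace BinaryHierarchy

lemma ext' {σ τ : BinaryHierarchy J} (h : σ.clusters = τ.clusters) : σ = τ := by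
  cases σ; cases τ; cases h; rfl

variable (τ : BinaryHierarchy J)

lemma comparable {I K K' : Finset J} (hK : K ∈ τ.clusters) (hK' : K' ∈ τ.clusters)
    (hI : I.Nonempty) (h1 : I ⊆ K) (h2 : I ⊆ K') : K ⊆ K' ∨ K' ⊆ K := by
  rcases τ.laminar K hK K' hK' with h | h | h
  · exact Or.inl h
  · exact Or.inr h
  · obtain ⟨x, hx⟩ := hI
    exact absurd (h2 hx) (Finset.disjoint_left.mp h (h1 hx))

/-- If the members of `τ.clusters` satisfying `p` form a chain and there is at least one,
then the inf of the filtered family is a minimum. -/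
lemma inf_filter_spec (p : Finset J → Prop) [DecidablePred p]
    (hne : ∃ K ∈ τ.clusters, p K)
    (hchain : ∀ K ∈ τ.clusters, ∀ K' ∈ τ.clusters, p K → p K' → K ⊆ K' ∨ K' ⊆ K) :
    (τ.clusters.filter p).inf id ∈ τ.clusters ∧ p ((τ.clusters.filter p).inf id) ∧
      ∀ K ∈ τ.clusters, p K → (τ.clusters.filter p).inf id ⊆ K := by
  set s := τ.clusters.filter p with hs
  have hsne : s.Nonempty := by
    obtain ⟨K, hK, hpK⟩ := hne
    exact ⟨K, by simp [hs, hK, hpK]⟩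
  obtain ⟨m, hmM⟩ := Finset.exists_minimal hsne
  have hm : m ∈ s := hmM.1
  have hmin : ∀ x ∈ s, ¬ x < m := fun x hx => hmM.not_lt hx
  have hmem : m ∈ τ.clusters ∧ p m := by simpa [hs] using hm
  have hle : ∀ K ∈ τ.clusters, p K → m ⊆ K := by
    intro K hK hpK
    rcases hchain m hmem.1 K hK hmem.2 hpK with h | h
    · exact h
    · rcases eq_or_lt_of_le (Finset.le_iff_subset.mpr h) with he | hlt
      · exact le_of_eq he.symm
      · exact absurd hlt (hmin K (by simp [hs, hK, hpK]))
  have : s.inf id = m := by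
    refine le_antisymm (Finset.inf_le hm) (Finset.le_inf ?_)
    intro b hb
    have hb' : b ∈ τ.clusters ∧ p b := by simpa [hs] using hb
    exact hle b hb'.1 hb'.2
  rw [this]
  exact ⟨hmem.1, hmem.2, hle⟩

lemma parent_spec {I : Finset J} (hI : I ∈ τ.clusters) (hne : I ≠ univ) :
    τ.parent I ∈ τ.clusters ∧ I ⊂ τ.parent I ∧
      ∀ K ∈ τ.clusters, I ⊂ K → τ.parent I ⊆ K := by
  have hIne := τ.nonempty_of_mem I hI
  exact τ.inf_filter_spec (fun K => I ⊂ K) ⟨univ, τ.root_mem, Finset.ssubset_univ_iff.mpr hne⟩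
    (fun K hK K' hK' h h' => τ.comparable hK hK' hIne h.subset h'.subset)

lemma parent_mem {I : Finset J} (hI : I ∈ τ.clusters) (hne : I ≠ univ) :
    τ.parent I ∈ τ.clusters := (τ.parent_spec hI hne).1

lemma ssubset_parent {I : Finset J} (hI : I ∈ τ.clusters) (hne : I ≠ univ) :
    I ⊂ τ.parent I := (τ.parent_spec hI hne).2.1

lemma parent_min {I : Finset J} (hI : I ∈ τ.clusters) (hne : I ≠ univ)
    {K : Finset J} (hK : K ∈ τ.clusters) (h : I ⊂ K) : τ.parent I ⊆ K :=
  (τ.parent_spec hI hne).2.2 K hK h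

lemma parent_univ : τ.parent (univ : Finset J) = univ := by
  have : τ.clusters.filter (fun K => (univ : Finset J) ⊂ K) = ∅ := by
    refine Finset.filter_eq_empty_iff.mpr ?_
    intro K _ h
    exact absurd (Finset.subset_univ K) h.not_subset
  rw [parent, this, Finset.inf_empty, Finset.top_eq_univ]

lemma parent_eq_of {A I : Finset J} (hA : A ∈ τ.clusters) (hI : I ∈ τ.clusters)
    (hAI : A ⊂ I) (hmin : ∀ K ∈ τ.clusters, A ⊂ K → I ⊆ K) : τ.parent A = I := by
  have hne : A ≠ univ := by
    intro h
    subst h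
    exact hAI.not_subset (Finset.subset_univ I)
  refine le_antisymm (Finset.inf_le ?_) (Finset.le_inf ?_)
  · simp [hI, hAI]
  · intro b hb
    obtain ⟨hb1, hb2⟩ := Finset.mem_filter.mp hb
    exact hmin b hb1 hb2

/-- Smallest cluster containing a given nonempty set. -/
def above (S : Finset J) : Finset J := (τ.clusters.filter fun K => S ⊆ K).inf id

lemma above_spec {S : Finset J} (hS : S.Nonempty) :
    τ.above S ∈ τ.clusters ∧ S ⊆ τ.above S ∧
      ∀ K ∈ τ.clusters, S ⊆ K → τ.above S ⊆ K :=
  τ.inf_filter_spec (fun K => S ⊆ K) ⟨univ, τ.root_mem, Finset.subset_univ S⟩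
    (fun K hK K' hK' h h' => τ.comparable hK hK' hS h h')

lemma split_cases {I L R K : Finset J} (hI : I ∈ τ.clusters) (hL : L ∈ τ.clusters)
    (hR : R ∈ τ.clusters) (hd : Disjoint L R) (hu : L ∪ R = I)
    (hK : K ∈ τ.clusters) (hKI : K ⊆ I) : K ⊆ L ∨ K ⊆ R ∨ K = I := by
  have hLne := τ.nonempty_of_mem L hL
  have hRne := τ.nonempty_of_mem R hR
  have hKne := τ.nonempty_of_mem K hK
  rcases τ.laminar K hK L hL with h1 | h1 | h1
  · exact Or.inl h1
  · -- L ⊆ K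
    rcases τ.laminar K hK R hR with h2 | h2 | h2
    · obtain ⟨x, hx⟩ := hLne
      exact absurd (h2 (h1 hx)) (Finset.disjoint_left.mp hd hx)
    · -- R ⊆ K too, so K = I
      refine Or.inr (Or.inr (le_antisymm hKI ?_))
      rw [← hu]; exact Finset.union_subset h1 h2
    · -- K disjoint from R, K ⊆ I = L ∪ R so K ⊆ L
      refine Or.inl fun x hx => ?_
      rcases Finset.mem_union.mp (hu ▸ hKI hx) with h | h
      · exact h
      · exact absurd h (Finset.disjoint_left.mp h2 hx)
  · -- K disjoint from L: K ⊆ R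
    rcases τ.laminar K hK R hR with h2 | h2 | h2
    · exact Or.inr (Or.inl h2)
    · exact Or.inr (Or.inl (fun x hx => by
        rcases Finset.mem_union.mp (hu ▸ hKI hx) with h | h
        · exact absurd h (Finset.disjoint_left.mp h1 hx)
        · exact h))
    · obtain ⟨x, hx⟩ := hKne
      rcases Finset.mem_union.mp (hu ▸ hKI hx) with h | h
      · exact absurd h (Finset.disjoint_left.mp h1 hx)
      · exact absurd h (Finset.disjoint_left.mp h2 hx)

/-- both pieces of a split are proper. -/
lemma split_ssubset {I L R : Finset J} (hL : L ∈ τ.clusters)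
    (hR : R ∈ τ.clusters) (hd : Disjoint L R) (hu : L ∪ R = I) : L ⊂ I ∧ R ⊂ I := by
  have hLne := τ.nonempty_of_mem L hL
  have hRne := τ.nonempty_of_mem R hR
  constructor
  · refine ⟨hu ▸ Finset.subset_union_left, fun h => ?_⟩
    obtain ⟨x, hx⟩ := hRne
    exact Finset.disjoint_left.mp hd (h (hu ▸ Finset.mem_union_right L hx)) hx
  · refine ⟨hu ▸ Finset.subset_union_right, fun h => ?_⟩
    obtain ⟨x, hx⟩ := hLne
    exact Finset.disjoint_right.mp hd (h (hu ▸ Finset.mem_union_left R hx)) hx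

/-- the parent of a piece of a split of `I` is `I`. -/
lemma parent_of_split_left {I L R : Finset J} (hI : I ∈ τ.clusters) (hL : L ∈ τ.clusters)
    (hR : R ∈ τ.clusters) (hd : Disjoint L R) (hu : L ∪ R = I) : τ.parent L = I := by
  obtain ⟨hLI, hRI⟩ := τ.split_ssubset hL hR hd hu
  have hLne := τ.nonempty_of_mem L hL
  refine τ.parent_eq_of hL hI hLI ?_
  intro K hK hLK
  rcases τ.comparable hK hI hLne hLK.subset hLI.subset with h | h
  · rcases τ.split_cases hI hL hR hd hu hK h with h1 | h1 | h1
    · exact absurd h1 hLK.not_subset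
    · obtain ⟨x, hx⟩ := hLne
      exact absurd (h1 (hLK.subset hx)) (Finset.disjoint_left.mp hd hx)
    · exact le_of_eq h1.symm
  · exact h

lemma parent_of_split_right {I L R : Finset J} (hI : I ∈ τ.clusters) (hL : L ∈ τ.clusters)
    (hR : R ∈ τ.clusters) (hd : Disjoint L R) (hu : L ∪ R = I) : τ.parent R = I :=
  τ.parent_of_split_left hI hR hL hd.symm (by rw [Finset.union_comm]; exact hu)

omit [DecidableEq J] [Fintype J] in
lemma one_lt_card_of_ssubset {A I : Finset J} (hAne : A.Nonempty) (h : A ⊂ I) :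
    1 < I.card := by
  obtain ⟨a, ha⟩ := hAne
  obtain ⟨b, hb, hbA⟩ := Finset.exists_of_ssubset h
  exact Finset.one_lt_card.mpr ⟨a, h.subset ha, b, hb, fun hab => hbA (hab ▸ ha)⟩

/-- The sibling of a non-root cluster is a cluster, and the parent splits into the
cluster and its sibling. -/
lemma sibling_spec {A : Finset J} (hA : A ∈ τ.clusters) (hne : A ≠ univ) :
    τ.parent A \ A ∈ τ.clusters ∧ A ∪ (τ.parent A \ A) = τ.parent A ∧
      (τ.parent A \ A).Nonempty := by
  have hP := τ.parent_mem hA hne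
  have hAP := τ.ssubset_parent hA hne
  have hAne := τ.nonempty_of_mem A hA
  have hcard : 1 < (τ.parent A).card := one_lt_card_of_ssubset hAne hAP
  obtain ⟨L, hL, R, hR, hd, hu⟩ := τ.binary_split _ hP hcard
  obtain ⟨hLP, hRP⟩ := τ.split_ssubset hL hR hd hu
  have key : ∀ X Y : Finset J, X ∈ τ.clusters → Y ∈ τ.clusters → Disjoint X Y →
      X ∪ Y = τ.parent A → A ⊆ X → τ.parent A \ A ∈ τ.clusters := by
    intro X Y hX hY hdXY huXY hAX
    have hXP : X ⊂ τ.parent A := (τ.split_ssubset hX hY hdXY huXY).1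
    have : A = X := by
      rcases eq_or_lt_of_le (Finset.le_iff_subset.mpr hAX) with h | h
      · exact h
      · exact absurd (τ.parent_min hA hne hX h) hXP.not_subset
    have : τ.parent A \ A = Y := by
      rw [← huXY, this, Finset.union_sdiff_cancel_left hdXY]
    rw [this]; exact hY
  have hmem : τ.parent A \ A ∈ τ.clusters := by
    rcases τ.split_cases hP hL hR hd hu hA hAP.subset with h | h | h
    · exact key L R hL hR hd hu h
    · exact key R L hR hL hd.symm (by rw [Finset.union_comm]; exact hu) h
    · exact absurd h hAP.ne
  exact ⟨hmem, Finset.union_sdiff_of_subset hAP.subset, 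
    Finset.sdiff_nonempty.mpr hAP.not_subset⟩

/-- Given a cluster `A` whose parent is not the root, the NNI move can be performed:
there exists a binary hierarchy with the prescribed cluster set. -/
lemma exists_nni_move {A : Finset J} (hA : A ∈ τ.clusters) (hP : τ.parent A ≠ univ) :
    ∃ τ' : BinaryHierarchy J, NNIMove τ τ' ∧
      τ'.clusters = (τ.clusters \ {τ.parent A}) ∪
        {(τ.parent A \ A) ∪ (τ.parent (τ.parent A) \ τ.parent A)} := by
  classical
  have hAu : A ≠ univ := by
    intro h; subst h; exact hP τ.parent_univ
  set P := τ.parent A with hPdef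
  set G := τ.parent P with hGdef
  set B := P \ A with hBdef
  set Cc := G \ P with hCcdef
  set N := B ∪ Cc with hNdef
  have hAne := τ.nonempty_of_mem A hA
  obtain ⟨hBmem, hABu, hBne⟩ := τ.sibling_spec hA hAu
  have hPmem : P ∈ τ.clusters := τ.parent_mem hA hAu
  have hAP : A ⊂ P := τ.ssubset_parent hA hAu
  obtain ⟨hCcmem, hPCu, hCcne⟩ := τ.sibling_spec hPmem hP
  have hGmem : G ∈ τ.clusters := τ.parent_mem hPmem hP
  have hPG : P ⊂ G := τ.ssubset_parent hPmem hP
  have hdAB : Disjoint A B := Finset.disjoint_sdiff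
  have hdPCc : Disjoint P Cc := Finset.disjoint_sdiff
  have hdBCc : Disjoint B Cc := hdPCc.mono_left (Finset.sdiff_subset)
  have hdACc : Disjoint A Cc := hdPCc.mono_left hAP.subset
  have hdAN : Disjoint A N := Finset.disjoint_union_right.mpr ⟨hdAB, hdACc⟩
  have hNG : N ⊆ G := Finset.union_subset (Finset.sdiff_subset.trans hPG.subset) Finset.sdiff_subset
  have hNne : N.Nonempty := hBne.mono Finset.subset_union_left
  have hBP : B ≠ P := by
    intro h
    obtain ⟨x, hx⟩ := hAne
    exact Finset.disjoint_left.mp hdAB hx (h ▸ hAP.subset hx)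
  have hCcP : Cc ≠ P := by
    intro h
    obtain ⟨x, hx⟩ := hCcne
    exact Finset.disjoint_right.mp hdPCc hx (h ▸ hx)
  have hNP : N ≠ P := by
    intro h
    obtain ⟨x, hx⟩ := hAne
    have : x ∈ N := h ▸ hAP.subset hx
    rcases Finset.mem_union.mp this with h1 | h1
    · exact Finset.disjoint_left.mp hdAB hx h1
    · exact Finset.disjoint_left.mp hdACc hx h1
  have hPu : P ≠ univ := hP
  have hAuN : A ∪ N = G := by
    rw [hNdef, ← Finset.union_assoc, hABu, hPCu]
  set S : Finset (Finset J) := (τ.clusters \ {P}) ∪ {N} with hSdef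
  have memS : ∀ K : Finset J, K ∈ S ↔ (K ∈ τ.clusters ∧ K ≠ P) ∨ K = N := by
    intro K
    simp [hSdef, Finset.mem_union, Finset.mem_sdiff, Finset.mem_singleton]
    tauto
  -- laminar versus the new cluster N
  have lamN : ∀ K ∈ τ.clusters, K ≠ P → K ⊆ N ∨ N ⊆ K ∨ Disjoint K N := by
    intro K hK hKP
    rcases τ.laminar K hK G hGmem with h | h | h
    · by_cases hKG : K = G
      · exact Or.inr (Or.inl (hKG ▸ hNG))
      · rcases τ.split_cases hGmem hPmem hCcmem hdPCc hPCu hK h with h1 | h1 | h1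
        · rcases τ.split_cases hPmem hA hBmem hdAB hABu hK h1 with h2 | h2 | h2
          · refine Or.inr (Or.inr ?_)
            exact Finset.disjoint_union_right.mpr ⟨(hdAB.mono_left h2), (hdACc.mono_left h2)⟩
          · exact Or.inl (h2.trans Finset.subset_union_left)
          · exact absurd h2 hKP
        · exact Or.inl (h1.trans Finset.subset_union_right)
        · exact absurd h1 hKG
    · exact Or.inr (Or.inl (hNG.trans h))
    · exact Or.inr (Or.inr (h.mono_right hNG))
  refine ⟨⟨S, ?_, ?_, ?_, ?_, ?_⟩, ?_, ?_⟩
  · -- root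
    exact (memS _).mpr (Or.inl ⟨τ.root_mem, fun h => hPu h.symm⟩)
  · -- singletons
    intro j
    refine (memS _).mpr (Or.inl ⟨τ.singleton_mem j, fun h => ?_⟩)
    have := one_lt_card_of_ssubset hAne hAP
    rw [← h, Finset.card_singleton] at this
    omega
  · -- nonempty
    intro I hI
    rcases (memS I).mp hI with ⟨h1, _⟩ | h1
    · exact τ.nonempty_of_mem I h1
    · exact h1 ▸ hNne
  · -- laminar
    intro I hI K hK
    rcases (memS I).mp hI with ⟨hI1, hI2⟩ | hI1 <;>
      rcases (memS K).mp hK with ⟨hK1, hK2⟩ | hK1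
    · exact τ.laminar I hI1 K hK1
    · subst hK1
      rcases lamN I hI1 hI2 with h | h | h
      · exact Or.inl h
      · exact Or.inr (Or.inl h)
      · exact Or.inr (Or.inr h)
    · subst hI1
      rcases lamN K hK1 hK2 with h | h | h
      · exact Or.inr (Or.inl h)
      · exact Or.inl h
      · exact Or.inr (Or.inr h.symm)
    · subst hI1; subst hK1; exact Or.inl subset_rfl
  · -- binary split
    intro I hI hcard
    rcases (memS I).mp hI with ⟨hI1, hI2⟩ | hI1
    · by_cases hIG : I = G
      · subst hIG
        exact ⟨A, (memS _).mpr (Or.inl ⟨hA, hAP.ne⟩), N, (memS _).mpr (Or.inr rfl),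
          hdAN, hAuN⟩
      · obtain ⟨L, hL, R, hR, hd, hu⟩ := τ.binary_split I hI1 hcard
        have hLP : L ≠ P := by
          intro h
          exact hIG ((h ▸ τ.parent_of_split_left hI1 hL hR hd hu).symm)
        have hRP : R ≠ P := by
          intro h
          exact hIG ((h ▸ τ.parent_of_split_right hI1 hL hR hd hu).symm)
        exact ⟨L, (memS _).mpr (Or.inl ⟨hL, hLP⟩), R, (memS _).mpr (Or.inl ⟨hR, hRP⟩), hd, hu⟩
    · subst hI1
      exact ⟨B, (memS _).mpr (Or.inl ⟨hBmem, hBP⟩), Cc, (memS _).mpr (Or.inl ⟨hCcmem, hCcP⟩),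
        hdBCc, rfl⟩
  · -- it is an NNI move
    exact ⟨A, hA, hP, by rw [hABu]⟩
  · -- the cluster set
    rfl

end BinaryHierarchy

section Path

/-- Composition of two indexed paths for a relation. -/
lemma path_comp {α : Type*} {R : α → α → Prop} {x y z : α} {m₁ m₂ : ℕ} {f g : ℕ → α}
    (hf0 : f 0 = x) (hf1 : f m₁ = y) (hf : ∀ i < m₁, R (f i) (f (i + 1)))
    (hg0 : g 0 = y) (hg1 : g m₂ = z) (hg : ∀ i < m₂, R (g i) (g (i + 1))) :
    ∃ h : ℕ → α, h 0 = x ∧ h (m₁ + m₂) = z ∧ ∀ i < m₁ + m₂, R (h i) (h (i + 1)) := by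
  refine ⟨fun i => if i < m₁ then f i else g (i - m₁), ?_, ?_, ?_⟩
  · by_cases h : 0 < m₁
    · simp [h, hf0]
    · have hm : m₁ = 0 := by omega
      subst hm
      simp only [lt_irrefl, if_neg, Nat.sub_zero]
      simp only [Nat.lt_irrefl, if_false]
      rw [hg0, ← hf1, hf0]
  · have h : ¬ m₁ + m₂ < m₁ := by omega
    simp only [h, if_false, Nat.add_sub_cancel_left, hg1]
  · intro i hi
    by_cases h1 : i < m₁
    · by_cases h2 : i + 1 < m₁
      · simpa [h1, h2] using hf i h1
      · have he : i + 1 = m₁ := by omega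
        simp only [if_pos h1, if_neg h2]
        rw [he, Nat.sub_self, hg0, ← hf1, ← he]
        exact hf i h1
    · have h2 : ¬ i + 1 < m₁ := by omega
      have h3 : i - m₁ < m₂ := by omega
      have h4 : i + 1 - m₁ = (i - m₁) + 1 := by omega
      simpa [h1, h2, h4] using hg _ h3

end Path

namespace BinaryHierarchy

variable (σ : BinaryHierarchy J)

/-- One step of the merging process. -/
lemma merge_one_step (Pa : Finset (Finset J))
    (hcov : ∀ j : J, ∃ B ∈ Pa, j ∈ B)
    (hdis : ∀ B ∈ Pa, ∀ B' ∈ Pa, B ≠ B' → Disjoint B B')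
    (hblocks : ∀ B ∈ Pa, B ∈ σ.clusters)
    {B1 B2 : Finset J} (hB1 : B1 ∈ Pa) (hB2 : B2 ∈ Pa) (hne12 : B1 ≠ B2)
    {Qa Qb : Finset J} (hQa : Qa ∈ σ.clusters) (hQb : Qb ∈ σ.clusters)
    (hd : Disjoint Qa Qb) (hu : Qa ∪ Qb = σ.above (B1 ∪ B2))
    (h1 : B1 ⊆ Qa) (h2 : B2 ⊆ Qb) (hQaB1 : Qa ≠ B1) :
    ∃ σ₁ : BinaryHierarchy J, NNIMove σ σ₁ ∧ (∀ B ∈ Pa, B ∈ σ₁.clusters) ∧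
      (∀ K : Finset J, (∃ B ∈ Pa, K ⊆ B) → (K ∈ σ₁.clusters ↔ K ∈ σ.clusters)) ∧
      (Pa.filter (· ⊆ σ₁.above (B1 ∪ B2))).card <
        (Pa.filter (· ⊆ σ.above (B1 ∪ B2))).card := by
  classical
  have hB1m := hblocks B1 hB1
  have hB2m := hblocks B2 hB2
  have hB1ne := σ.nonempty_of_mem B1 hB1m
  have hB2ne := σ.nonempty_of_mem B2 hB2m
  have hSne : (B1 ∪ B2).Nonempty := hB1ne.mono Finset.subset_union_left
  obtain ⟨hQmem, hSQ, hQmin⟩ := σ.above_spec hSne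
  have hB1Qa : B1 ⊂ Qa := ⟨h1, fun h => hQaB1 (le_antisymm h h1)⟩
  have hQaQ : Qa ⊂ σ.above (B1 ∪ B2) := (σ.split_ssubset hQa hQb hd hu).1
  have hQbQ : Qb ⊂ σ.above (B1 ∪ B2) := (σ.split_ssubset hQa hQb hd hu).2
  have hcard : 1 < Qa.card := one_lt_card_of_ssubset hB1ne hB1Qa
  obtain ⟨X, hX, Y, hY, hdXY, huXY⟩ := σ.binary_split Qa hQa hcard
  obtain ⟨A1, A2, hA1, hA2, hdA, huA, hB1A1⟩ :
      ∃ A1 A2, A1 ∈ σ.clusters ∧ A2 ∈ σ.clusters ∧ Disjoint A1 A2 ∧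
        A1 ∪ A2 = Qa ∧ B1 ⊆ A1 := by
    rcases σ.split_cases hQa hX hY hdXY huXY hB1m hB1Qa.subset with h | h | h
    · exact ⟨X, Y, hX, hY, hdXY, huXY, h⟩
    · exact ⟨Y, X, hY, hX, hdXY.symm, by rw [Finset.union_comm]; exact huXY, h⟩
    · exact absurd h hB1Qa.ne
  have hA2ne := σ.nonempty_of_mem A2 hA2
  have hA1Qa : A1 ⊆ Qa := huA ▸ Finset.subset_union_left
  have hA2Qa : A2 ⊆ Qa := huA ▸ Finset.subset_union_right
  have hparA2 : σ.parent A2 = Qa := σ.parent_of_split_right hQa hA1 hA2 hdA huA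
  have hparQa : σ.parent Qa = σ.above (B1 ∪ B2) :=
    σ.parent_of_split_left hQmem hQa hQb hd hu
  have hQau : Qa ≠ univ := by
    intro h
    exact (h ▸ hQaQ).not_subset (Finset.subset_univ _)
  have hPne : σ.parent A2 ≠ univ := by rw [hparA2]; exact hQau
  obtain ⟨σ₁, hmove, hclusters⟩ := σ.exists_nni_move hA2 hPne
  have hQaA2 : Qa \ A2 = A1 := by
    rw [← huA, Finset.union_sdiff_cancel_right hdA]
  have hQQa : σ.above (B1 ∪ B2) \ Qa = Qb := by
    rw [← hu, Finset.union_sdiff_cancel_left hd]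
  have hcl : σ₁.clusters = (σ.clusters \ {Qa}) ∪ {A1 ∪ Qb} := by
    rw [hclusters, hparA2, hparQa, hQaA2, hQQa]
  have memS : ∀ K : Finset J, K ∈ σ₁.clusters ↔
      (K ∈ σ.clusters ∧ K ≠ Qa) ∨ K = A1 ∪ Qb := by
    intro K
    rw [hcl]
    simp [Finset.mem_union, Finset.mem_sdiff, Finset.mem_singleton]
    tauto
  have hblockQa : ∀ B ∈ Pa, ¬ Qa ⊆ B := by
    intro B hB h
    have hB1B : B1 ⊂ B := hB1Qa.trans_subset h
    obtain ⟨x, hx⟩ := hB1ne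
    exact Finset.disjoint_left.mp (hdis B1 hB1 B hB hB1B.ne) hx (hB1B.subset hx)
  have hblocks₁ : ∀ B ∈ Pa, B ∈ σ₁.clusters := by
    intro B hB
    refine (memS B).mpr (Or.inl ⟨hblocks B hB, fun h => ?_⟩)
    exact hblockQa B hB (h ▸ subset_rfl)
  have hfine : ∀ K : Finset J, (∃ B ∈ Pa, K ⊆ B) → (K ∈ σ₁.clusters ↔ K ∈ σ.clusters) := by
    rintro K ⟨B, hB, hKB⟩
    constructor
    · intro h
      rcases (memS K).mp h with ⟨h1', _⟩ | h1'
      · exact h1'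
      · exfalso
        subst h1'
        have hB1B : B1 ⊆ B := (hB1A1.trans Finset.subset_union_left).trans hKB
        have hB2B : B2 ⊆ B := (h2.trans Finset.subset_union_right).trans hKB
        have e1 : B1 = B := by
          by_contra hne
          obtain ⟨x, hx⟩ := hB1ne
          exact Finset.disjoint_left.mp (hdis B1 hB1 B hB hne) hx (hB1B hx)
        have e2 : B2 = B := by
          by_contra hne
          obtain ⟨x, hx⟩ := hB2ne
          exact Finset.disjoint_left.mp (hdis B2 hB2 B hB hne) hx (hB2B hx)
        exact hne12 (e1.trans e2.symm)
    · intro h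
      refine (memS K).mpr (Or.inl ⟨h, fun he => ?_⟩)
      exact hblockQa B hB (he ▸ hKB)
  -- the measure decreases
  obtain ⟨hQ1mem, hSQ1, hQ1min⟩ := σ₁.above_spec hSne
  have hNmem : A1 ∪ Qb ∈ σ₁.clusters := (memS _).mpr (Or.inr rfl)
  have hSN : B1 ∪ B2 ⊆ A1 ∪ Qb :=
    Finset.union_subset (hB1A1.trans Finset.subset_union_left)
      (h2.trans Finset.subset_union_right)
  have hQ1N : σ₁.above (B1 ∪ B2) ⊆ A1 ∪ Qb := hQ1min _ hNmem hSN
  have hNQ : A1 ∪ Qb ⊆ σ.above (B1 ∪ B2) :=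
    Finset.union_subset (hA1Qa.trans hQaQ.subset) hQbQ.subset
  have hsub : Pa.filter (· ⊆ σ₁.above (B1 ∪ B2)) ⊆ Pa.filter (· ⊆ σ.above (B1 ∪ B2)) := by
    intro W hW
    obtain ⟨hW1, hW2⟩ := Finset.mem_filter.mp hW
    exact Finset.mem_filter.mpr ⟨hW1, (hW2.trans hQ1N).trans hNQ⟩
  obtain ⟨x, hxA2⟩ := σ.nonempty_of_mem A2 hA2
  obtain ⟨W, hW, hxW⟩ := hcov x
  have hWm := hblocks W hW
  have hWA2 : W ⊆ A2 := by
    rcases σ.laminar W hWm A2 hA2 with h | h | h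
    · exact h
    · -- A2 ⊆ W
      rcases σ.comparable hWm hQa ⟨x, hxA2⟩ h hA2Qa with h' | h'
      · rcases σ.split_cases hQa hA1 hA2 hdA huA hWm h' with h'' | h'' | h''
        · exact absurd (h'' (h hxA2)) (Finset.disjoint_right.mp hdA hxA2)
        · exact h''
        · exact absurd (h''.symm ▸ subset_rfl : Qa ⊆ W) (hblockQa W hW)
      · exact absurd h' (hblockQa W hW)
    · exact absurd hxW (Finset.disjoint_right.mp h hxA2)
  have hWQ : W ∈ Pa.filter (· ⊆ σ.above (B1 ∪ B2)) :=
    Finset.mem_filter.mpr ⟨hW, (hWA2.trans hA2Qa).trans hQaQ.subset⟩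
  have hWQ1 : W ∉ Pa.filter (· ⊆ σ₁.above (B1 ∪ B2)) := by
    intro hcon
    have hWN : W ⊆ A1 ∪ Qb := (Finset.mem_filter.mp hcon).2.trans hQ1N
    rcases Finset.mem_union.mp (hWN hxW) with h | h
    · exact Finset.disjoint_right.mp hdA (hWA2 hxW) h
    · exact Finset.disjoint_left.mp hd (hA2Qa (hWA2 hxW)) h
  refine ⟨σ₁, hmove, hblocks₁, hfine, Finset.card_lt_card ?_⟩
  exact (Finset.ssubset_iff_of_subset hsub).mpr ⟨W, hWQ, hWQ1⟩


/-- The merging process: two distinct blocks of a partition consisting of clusters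
can be made siblings by at most `t - 2` NNI moves, where `t` bounds the number of
blocks below the smallest cluster above both, preserving all blocks and all clusters
inside blocks. -/
lemma merge (Pa : Finset (Finset J))
    (hcov : ∀ j : J, ∃ B ∈ Pa, j ∈ B)
    (hdis : ∀ B ∈ Pa, ∀ B' ∈ Pa, B ≠ B' → Disjoint B B') :
    ∀ t : ℕ, ∀ σ : BinaryHierarchy J, (∀ B ∈ Pa, B ∈ σ.clusters) →
    ∀ B1 B2 : Finset J, B1 ∈ Pa → B2 ∈ Pa → B1 ≠ B2 →
    (Pa.filter (· ⊆ σ.above (B1 ∪ B2))).card ≤ t →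
    ∃ (m : ℕ) (f : ℕ → BinaryHierarchy J), m ≤ t - 2 ∧ f 0 = σ ∧
      (∀ i < m, NNIMove (f i) (f (i + 1))) ∧
      B1 ∪ B2 ∈ (f m).clusters ∧ (∀ B ∈ Pa, B ∈ (f m).clusters) ∧
      (∀ K : Finset J, (∃ B ∈ Pa, K ⊆ B) → (K ∈ (f m).clusters ↔ K ∈ σ.clusters)) := by
  intro t
  induction t with
  | zero =>
    intro σ hblocks B1 B2 hB1 hB2 hne12 hcard
    exfalso
    have hB1m := hblocks B1 hB1
    have hSne : (B1 ∪ B2).Nonempty :=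
      (σ.nonempty_of_mem B1 hB1m).mono Finset.subset_union_left
    obtain ⟨hQmem, hSQ, hQmin⟩ := σ.above_spec hSne
    have : B1 ∈ Pa.filter (· ⊆ σ.above (B1 ∪ B2)) :=
      Finset.mem_filter.mpr ⟨hB1, Finset.subset_union_left.trans hSQ⟩
    have := Finset.card_pos.mpr ⟨B1, this⟩
    omega
  | succ t ih =>
    intro σ hblocks B1 B2 hB1 hB2 hne12 hcard
    by_cases hmem : B1 ∪ B2 ∈ σ.clusters
    · exact ⟨0, fun _ => σ, Nat.zero_le _, rfl, fun i hi => absurd hi (Nat.not_lt_zero i),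
        hmem, hblocks, fun K _ => Iff.rfl⟩
    · have hB1m := hblocks B1 hB1
      have hB2m := hblocks B2 hB2
      have hB1ne := σ.nonempty_of_mem B1 hB1m
      have hB2ne := σ.nonempty_of_mem B2 hB2m
      have hd12 : Disjoint B1 B2 := hdis B1 hB1 B2 hB2 hne12
      have hSne : (B1 ∪ B2).Nonempty := hB1ne.mono Finset.subset_union_left
      obtain ⟨hQmem, hSQ, hQmin⟩ := σ.above_spec hSne
      have hB1Q : B1 ⊆ σ.above (B1 ∪ B2) := Finset.subset_union_left.trans hSQ
      have hB2Q : B2 ⊆ σ.above (B1 ∪ B2) := Finset.subset_union_right.trans hSQ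
      have hQcard : 1 < (σ.above (B1 ∪ B2)).card := by
        obtain ⟨x, hx⟩ := hB1ne
        obtain ⟨y, hy⟩ := hB2ne
        refine Finset.one_lt_card.mpr ⟨x, hB1Q hx, y, hB2Q hy, fun hxy => ?_⟩
        exact Finset.disjoint_left.mp hd12 hx (hxy ▸ hy)
      obtain ⟨L, hL, R, hR, hd, hu⟩ := σ.binary_split _ hQmem hQcard
      have hB1nQ : B1 ≠ σ.above (B1 ∪ B2) := by
        intro h
        obtain ⟨y, hy⟩ := hB2ne
        exact Finset.disjoint_left.mp hd12 (h ▸ hB2Q hy) hy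
      have hB2nQ : B2 ≠ σ.above (B1 ∪ B2) := by
        intro h
        obtain ⟨y, hy⟩ := hB1ne
        exact Finset.disjoint_right.mp hd12 (h ▸ hB1Q hy) hy
      have hcases1 : B1 ⊆ L ∨ B1 ⊆ R := by
        rcases σ.split_cases hQmem hL hR hd hu hB1m hB1Q with h | h | h
        · exact Or.inl h
        · exact Or.inr h
        · exact absurd h hB1nQ
      have hcases2 : B2 ⊆ L ∨ B2 ⊆ R := by
        rcases σ.split_cases hQmem hL hR hd hu hB2m hB2Q with h | h | h
        · exact Or.inl h
        · exact Or.inr h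
        · exact absurd h hB2nQ
      have hnotboth : ∀ Z : Finset J, Z ∈ σ.clusters → Z ⊂ σ.above (B1 ∪ B2) →
          ¬ (B1 ⊆ Z ∧ B2 ⊆ Z) := by
        rintro Z hZ hZQ ⟨hz1, hz2⟩
        exact hZQ.not_subset (hQmin Z hZ (Finset.union_subset hz1 hz2))
      have hLQ := (σ.split_ssubset hL hR hd hu).1
      have hRQ := (σ.split_ssubset hL hR hd hu).2
      have e : B2 ∪ B1 = B1 ∪ B2 := Finset.union_comm _ _
      have hnotQ : ¬ (L = B1 ∧ R = B2) ∧ ¬ (R = B1 ∧ L = B2) := by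
        constructor
        · rintro ⟨h1', h2'⟩
          exact hmem (by rw [← h1', ← h2', hu]; exact hQmem)
        · rintro ⟨h1', h2'⟩
          exact hmem (by rw [← h1', ← h2', Finset.union_comm R L, hu]; exact hQmem)
      have key : ∃ σ₁ : BinaryHierarchy J, NNIMove σ σ₁ ∧ (∀ B ∈ Pa, B ∈ σ₁.clusters) ∧
          (∀ K : Finset J, (∃ B ∈ Pa, K ⊆ B) → (K ∈ σ₁.clusters ↔ K ∈ σ.clusters)) ∧
          (Pa.filter (· ⊆ σ₁.above (B1 ∪ B2))).card <
            (Pa.filter (· ⊆ σ.above (B1 ∪ B2))).card := by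
        rcases hcases1 with h1' | h1' <;> rcases hcases2 with h2' | h2'
        · exact absurd ⟨h1', h2'⟩ (hnotboth L hL hLQ)
        · -- B1 ⊆ L, B2 ⊆ R
          by_cases hLB1 : L = B1
          · have hRB2 : R ≠ B2 := fun h => hnotQ.1 ⟨hLB1, h⟩
            obtain ⟨σ₁, ha, hb, hc, hd'⟩ := σ.merge_one_step Pa hcov hdis hblocks hB2 hB1
              hne12.symm hR hL hd.symm
              (by rw [Finset.union_comm R L, e]; exact hu) h2' h1' hRB2
            rw [e] at hd'
            exact ⟨σ₁, ha, hb, hc, hd'⟩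
          · exact σ.merge_one_step Pa hcov hdis hblocks hB1 hB2 hne12 hL hR hd hu h1' h2' hLB1
        · -- B1 ⊆ R, B2 ⊆ L
          by_cases hRB1 : R = B1
          · have hLB2 : L ≠ B2 := fun h => hnotQ.2 ⟨hRB1, h⟩
            obtain ⟨σ₁, ha, hb, hc, hd'⟩ := σ.merge_one_step Pa hcov hdis hblocks hB2 hB1
              hne12.symm hL hR hd
              (by rw [e]; exact hu) h2' h1' hLB2
            rw [e] at hd'
            exact ⟨σ₁, ha, hb, hc, hd'⟩
          · exact σ.merge_one_step Pa hcov hdis hblocks hB1 hB2 hne12 hR hL hd.symm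
              (by rw [Finset.union_comm R L]; exact hu) h1' h2' hRB1
        · exact absurd ⟨h1', h2'⟩ (hnotboth R hR hRQ)
      obtain ⟨σ₁, hmove, hblocks₁, hfine₁, hdrop⟩ := key
      -- the new measure is at least 2, so `t ≥ 2`
      have hge2 : 2 ≤ (Pa.filter (· ⊆ σ₁.above (B1 ∪ B2))).card := by
        obtain ⟨hQ1mem, hSQ1, _⟩ := σ₁.above_spec hSne
        have hp : ({B1, B2} : Finset (Finset J)) ⊆ Pa.filter (· ⊆ σ₁.above (B1 ∪ B2)) := by
          intro Z hZ
          rcases Finset.mem_insert.mp hZ with h | h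
          · subst h
            exact Finset.mem_filter.mpr ⟨hB1, Finset.subset_union_left.trans hSQ1⟩
          · rw [Finset.mem_singleton] at h
            subst h
            exact Finset.mem_filter.mpr ⟨hB2, Finset.subset_union_right.trans hSQ1⟩
        calc 2 = ({B1, B2} : Finset (Finset J)).card := (Finset.card_pair hne12).symm
          _ ≤ _ := Finset.card_le_card hp
      have hle : (Pa.filter (· ⊆ σ₁.above (B1 ∪ B2))).card ≤ t := by omega
      obtain ⟨m, f, hm, hf0, hstep, hfm1, hfm2, hfm3⟩ :=
        ih σ₁ hblocks₁ B1 B2 hB1 hB2 hne12 hle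
      refine ⟨m + 1, fun i => if i = 0 then σ else f (i - 1), by omega, by simp, ?_, ?_, ?_, ?_⟩
      · intro i hi
        match i with
        | 0 => simpa [hf0] using hmove
        | (j + 1) =>
          have hj : j < m := by omega
          simpa using hstep j hj
      · simpa using hfm1
      · simpa using hfm2
      · intro K hK
        simpa using (hfm3 K hK).trans (hfine₁ K hK)


lemma tri_step (j : ℕ) : j + j * (j - 1) / 2 = (j + 1) * j / 2 := by
  cases j with
  | zero => rfl
  | succ i =>
    have h : (i + 1 + 1) * (i + 1) = (i + 1) * i + 2 * (i + 1) := by ring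
    rw [h, Nat.add_mul_div_left _ _ (by norm_num : 0 < 2)]
    simp [Nat.add_comm]

/-- Main induction: if `σ` and `τ` share a partition into common clusters with at most
`k` blocks and agree inside the blocks, then they are connected by at most
`(k-1)(k-2)/2` NNI moves. -/
lemma main_induction : ∀ k : ℕ, ∀ σ τ : BinaryHierarchy J, ∀ Pa : Finset (Finset J),
    (∀ j : J, ∃ B ∈ Pa, j ∈ B) →
    (∀ B ∈ Pa, ∀ B' ∈ Pa, B ≠ B' → Disjoint B B') →
    (∀ B ∈ Pa, B ∈ σ.clusters) → (∀ B ∈ Pa, B ∈ τ.clusters) →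
    (∀ K : Finset J, (∃ B ∈ Pa, K ⊆ B) → (K ∈ σ.clusters ↔ K ∈ τ.clusters)) →
    Pa.card ≤ k →
    ∃ (m : ℕ) (f : ℕ → BinaryHierarchy J), m ≤ (k - 1) * (k - 2) / 2 ∧
      f 0 = σ ∧ f m = τ ∧ ∀ i < m, NNIAdjacent (f i) (f (i + 1)) := by
  intro k
  induction k with
  | zero =>
    intro σ τ Pa hcov hdis hblσ hblτ hfine hcard
    exfalso
    have hJ : (univ : Finset J).Nonempty := σ.nonempty_of_mem _ σ.root_mem
    obtain ⟨j, _⟩ := hJ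
    obtain ⟨B, hB, _⟩ := hcov j
    have := Finset.card_pos.mpr ⟨B, hB⟩
    omega
  | succ k ih =>
    intro σ τ Pa hcov hdis hblσ hblτ hfine hcard
    by_cases hk : Pa.card ≤ 1
    · -- a single block, which must be `univ`: the hierarchies agree
      have heq : σ = τ := by
        refine ext' (Finset.ext fun K => ?_)
        have hJ : (univ : Finset J).Nonempty := σ.nonempty_of_mem _ σ.root_mem
        obtain ⟨j, _⟩ := hJ
        obtain ⟨B, hB, hjB⟩ := hcov j
        have hBuniv : B = univ := by
          refine le_antisymm (Finset.subset_univ B) fun x _ => ?_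
          obtain ⟨B', hB', hxB'⟩ := hcov x
          have : B' = B := by
            by_contra hne
            have h1 : 1 < Pa.card := Finset.one_lt_card.mpr ⟨B', hB', B, hB, hne⟩
            omega
          exact this ▸ hxB'
        exact hfine K ⟨B, hB, hBuniv ▸ Finset.subset_univ K⟩
      exact ⟨0, fun _ => σ, Nat.zero_le _, rfl, heq ▸ rfl, fun i hi => absurd hi (by omega)⟩
    · push_neg at hk
      -- find a "cherry" of τ at block level: a minimal cluster strictly containing a block
      obtain ⟨B1', hB1', B2', hB2', hne''⟩ := Finset.one_lt_card.mp hk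
      have hblocksne : ∀ B ∈ Pa, B.Nonempty := fun B hB => τ.nonempty_of_mem B (hblτ B hB)
      have hS : (univ : Finset J) ∈ τ.clusters.filter (fun X => ∃ B ∈ Pa, B ⊂ X) := by
        refine Finset.mem_filter.mpr ⟨τ.root_mem, B1', hB1', Finset.subset_univ B1', fun h => ?_⟩
        obtain ⟨y, hy⟩ := hblocksne B2' hB2'
        exact Finset.disjoint_left.mp (hdis B1' hB1' B2' hB2' hne'') (h (Finset.mem_univ y)) hy
      obtain ⟨X, hXM⟩ := Finset.exists_minimal ⟨univ, hS⟩
      have hXS := hXM.1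
      have hXmin : ∀ x ∈ τ.clusters.filter (fun X => ∃ B ∈ Pa, B ⊂ X), ¬ x < X :=
        fun x hx => hXM.not_lt hx
      obtain ⟨hXτ, B, hB, hBX⟩ := Finset.mem_filter.mp hXS
      have hXcard : 1 < X.card := one_lt_card_of_ssubset (hblocksne B hB) hBX
      obtain ⟨L0, hL0, R0, hR0, hd0, hu0⟩ := τ.binary_split X hXτ hXcard
      obtain ⟨L', R', hL', hR', hd', hu', hBL'⟩ :
          ∃ L' R', L' ∈ τ.clusters ∧ R' ∈ τ.clusters ∧ Disjoint L' R' ∧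
            L' ∪ R' = X ∧ B ⊆ L' := by
        rcases τ.split_cases hXτ hL0 hR0 hd0 hu0 (hblτ B hB) hBX.subset with h | h | h
        · exact ⟨L0, R0, hL0, hR0, hd0, hu0, h⟩
        · exact ⟨R0, L0, hR0, hL0, hd0.symm, by rw [Finset.union_comm]; exact hu0, h⟩
        · exact absurd h hBX.ne
      have hL'X := (τ.split_ssubset hL' hR' hd' hu').1
      have hR'X := (τ.split_ssubset hL' hR' hd' hu').2
      have hLB : L' = B := by
        by_contra hne
        have : B ⊂ L' := ⟨hBL', fun h => hne (le_antisymm h hBL')⟩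
        have hmem : L' ∈ τ.clusters.filter (fun X => ∃ B ∈ Pa, B ⊂ X) :=
          Finset.mem_filter.mpr ⟨hL', B, hB, this⟩
        exact hXmin L' hmem hL'X
      -- `R'` is itself a block
      have hR'ne := τ.nonempty_of_mem R' hR'
      obtain ⟨x, hxR'⟩ := hR'ne
      obtain ⟨W, hW, hxW⟩ := hcov x
      have hWm := hblτ W hW
      have hWR' : W = R' := by
        rcases τ.laminar W hWm R' hR' with h | h | h
        · rcases eq_or_lt_of_le (Finset.le_iff_subset.mpr h) with h' | h'
          · exact h'
          · exfalso
            have hmem : R' ∈ τ.clusters.filter (fun X => ∃ B ∈ Pa, B ⊂ X) :=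
              Finset.mem_filter.mpr ⟨hR', W, hW, h'⟩
            exact hXmin R' hmem hR'X
        · -- R' ⊆ W
          rcases eq_or_lt_of_le (Finset.le_iff_subset.mpr h) with h' | h'
          · exact h'.symm
          · exfalso
            have hR'Wne : (R' : Finset J).Nonempty := ⟨x, hxR'⟩
            have hBW : B ⊂ W := by
              rcases τ.comparable hWm hXτ hR'Wne h hR'X.subset with h2 | h2
              · rcases τ.split_cases hXτ hL' hR' hd' hu' hWm h2 with h3 | h3 | h3
                · obtain ⟨y, hy⟩ := hR'Wne
                  exact absurd (h3 (h hy)) (Finset.disjoint_right.mp hd' hy)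
                · exact absurd h3 h'.not_subset
                · exact h3 ▸ hBX
              · exact hBX.trans_subset h2
            obtain ⟨y, hy⟩ := hblocksne B hB
            exact Finset.disjoint_left.mp (hdis B hB W hW hBW.ne) hy (hBW.subset hy)
        · exact absurd hxW (Finset.disjoint_right.mp h hxR')
      subst hWR'
      have hBτ : B ∈ τ.clusters := hLB ▸ hL'
      have hdBW : Disjoint B W := hLB ▸ hd'
      have hBWne : B ≠ W := by
        intro h
        obtain ⟨y, hy⟩ := hblocksne B hB
        exact Finset.disjoint_left.mp hdBW hy (h ▸ hy)
      have hXeq : B ∪ W = X := hLB ▸ hu'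
      -- merge `B` and `W` in σ
      have hfcard : (Pa.filter (· ⊆ σ.above (B ∪ W))).card ≤ Pa.card :=
        Finset.card_le_card (Finset.filter_subset _ _)
      obtain ⟨m₁, f₁, hm₁, hf₁0, hstep₁, hBW₁, hblocks₁, hfine₁⟩ :=
        merge Pa hcov hdis Pa.card σ hblσ B W hB hW hBWne hfcard
      set σ₁ := f₁ m₁ with hσ₁
      -- the coarser partition
      set Pa' : Finset (Finset J) := insert (B ∪ W) ((Pa.erase B).erase W) with hPa'
      have hmemPa' : ∀ Z : Finset J, Z ∈ Pa' ↔ Z = B ∪ W ∨ (Z ∈ Pa ∧ Z ≠ B ∧ Z ≠ W) := by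
        intro Z
        simp only [hPa', Finset.mem_insert, Finset.mem_erase]
        tauto
      have hcov' : ∀ j : J, ∃ Z ∈ Pa', j ∈ Z := by
        intro j
        obtain ⟨Z, hZ, hjZ⟩ := hcov j
        by_cases h : Z = B ∨ Z = W
        · refine ⟨B ∪ W, (hmemPa' _).mpr (Or.inl rfl), ?_⟩
          rcases h with h | h
          · exact Finset.mem_union_left _ (h ▸ hjZ)
          · exact Finset.mem_union_right _ (h ▸ hjZ)
        · push_neg at h
          exact ⟨Z, (hmemPa' _).mpr (Or.inr ⟨hZ, h.1, h.2⟩), hjZ⟩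
      have hdis' : ∀ Z ∈ Pa', ∀ Z' ∈ Pa', Z ≠ Z' → Disjoint Z Z' := by
        intro Z hZ Z' hZ' hne
        rcases (hmemPa' Z).mp hZ with h | ⟨h1, h2, h3⟩ <;>
          rcases (hmemPa' Z').mp hZ' with h' | ⟨h1', h2', h3'⟩
        · exact absurd (h.trans h'.symm) hne
        · subst h
          exact Finset.disjoint_union_left.mpr
            ⟨hdis B hB Z' h1' (fun he => h2' he.symm), hdis W hW Z' h1' (fun he => h3' he.symm)⟩
        · subst h'
          exact (Finset.disjoint_union_left.mpr
            ⟨hdis B hB Z h1 (fun he => h2 he.symm), hdis W hW Z h1 (fun he => h3 he.symm)⟩).symm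
        · exact hdis Z h1 Z' h1' hne
      have hblσ₁' : ∀ Z ∈ Pa', Z ∈ σ₁.clusters := by
        intro Z hZ
        rcases (hmemPa' Z).mp hZ with h | ⟨h1, _, _⟩
        · exact h ▸ hBW₁
        · exact hblocks₁ Z h1
      have hblτ' : ∀ Z ∈ Pa', Z ∈ τ.clusters := by
        intro Z hZ
        rcases (hmemPa' Z).mp hZ with h | ⟨h1, _, _⟩
        · exact h ▸ (hXeq ▸ hXτ)
        · exact hblτ Z h1
      have hXσ₁ : B ∪ W ∈ σ₁.clusters := hBW₁
      have hXτ' : B ∪ W ∈ τ.clusters := hXeq ▸ hXτ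
      have hBσ₁ : B ∈ σ₁.clusters := hblocks₁ B hB
      have hWσ₁ : W ∈ σ₁.clusters := hblocks₁ W hW
      have hfine' : ∀ K : Finset J, (∃ Z ∈ Pa', K ⊆ Z) →
          (K ∈ σ₁.clusters ↔ K ∈ τ.clusters) := by
        rintro K ⟨Z, hZ, hKZ⟩
        have base : ∀ K : Finset J, (∃ Z ∈ Pa, K ⊆ Z) →
            (K ∈ σ₁.clusters ↔ K ∈ τ.clusters) :=
          fun K hK => (hfine₁ K hK).trans (hfine K hK)
        rcases (hmemPa' Z).mp hZ with h | ⟨h1, _, _⟩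
        · subst h
          constructor
          · intro hKσ₁
            rcases σ₁.split_cases hXσ₁ hBσ₁ hWσ₁ hdBW rfl hKσ₁ hKZ with h' | h' | h'
            · exact (base K ⟨B, hB, h'⟩).mp hKσ₁
            · exact (base K ⟨W, hW, h'⟩).mp hKσ₁
            · exact h' ▸ hXτ'
          · intro hKτ
            rcases τ.split_cases hXτ' hBτ (hblτ W hW) hdBW rfl hKτ hKZ with h' | h' | h'
            · exact (base K ⟨B, hB, h'⟩).mpr hKτ
            · exact (base K ⟨W, hW, h'⟩).mpr hKτ
            · exact h' ▸ hXσ₁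
        · exact base K ⟨Z, h1, hKZ⟩
      have hcard' : Pa'.card ≤ k := by
        have h1 : W ∈ Pa.erase B := Finset.mem_erase.mpr ⟨fun h => hBWne h.symm, hW⟩
        have h2 : ((Pa.erase B).erase W).card = Pa.card - 2 := by
          rw [Finset.card_erase_of_mem h1, Finset.card_erase_of_mem hB]
          omega
        calc Pa'.card ≤ ((Pa.erase B).erase W).card + 1 := Finset.card_insert_le _ _
          _ ≤ k := by omega
      obtain ⟨m₂, f₂, hm₂, hf₂0, hf₂1, hstep₂⟩ :=
        ih σ₁ τ Pa' hcov' hdis' hblσ₁' hblτ' hfine' hcard'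
      obtain ⟨h, hh0, hh1, hhstep⟩ := path_comp (R := NNIAdjacent) hf₁0 rfl
        (fun i hi => Or.inl (hstep₁ i hi)) hf₂0 hf₂1 hstep₂
      refine ⟨m₁ + m₂, h, ?_, hh0, hh1, hhstep⟩
      have hk1 : 1 ≤ k := by omega
      have hb1 : m₁ ≤ k - 1 := by omega
      have := tri_step (k - 1)
      have he1 : k - 1 - 1 = k - 2 := by omega
      have he2 : k - 1 + 1 = k := by omega
      rw [he1, he2] at this
      calc m₁ + m₂ ≤ (k - 1) + (k - 1) * (k - 2) / 2 := by
            have : m₂ ≤ (k - 1) * (k - 2) / 2 := hm₂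
            omega
        _ = k * (k - 1) / 2 := this
        _ = (k + 1 - 1) * (k + 1 - 2) / 2 := by
            congr 1

end BinaryHierarchy

/-- any two binary hierarchies over an `n`-element index set (`n ≥ 2`)
are joined by a path of NNI moves of length at most `(n - 1)(n - 2)/2`; in particular
the NNI-graph is connected. -/
theorem nni_graph_connected (hn : 2 ≤ Fintype.card J) (σ τ : BinaryHierarchy J) :
    ∃ (m : ℕ) (f : ℕ → BinaryHierarchy J),
      m ≤ (Fintype.card J - 1) * (Fintype.card J - 2) / 2 ∧
      f 0 = σ ∧ f m = τ ∧ ∀ i < m, NNIAdjacent (f i) (f (i + 1)) := by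
  classical
  set Pa : Finset (Finset J) := Finset.univ.image (fun j => ({j} : Finset J)) with hPa
  have hmem : ∀ Z : Finset J, Z ∈ Pa ↔ ∃ j : J, Z = {j} := by
    intro Z
    simp only [hPa, Finset.mem_image, Finset.mem_univ, true_and]
    exact ⟨fun ⟨j, h⟩ => ⟨j, h.symm⟩, fun ⟨j, h⟩ => ⟨j, h.symm⟩⟩
  have hcov : ∀ j : J, ∃ B ∈ Pa, j ∈ B :=
    fun j => ⟨{j}, (hmem _).mpr ⟨j, rfl⟩, Finset.mem_singleton_self j⟩
  have hdis : ∀ B ∈ Pa, ∀ B' ∈ Pa, B ≠ B' → Disjoint B B' := by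
    intro B hB B' hB' hne
    obtain ⟨a, rfl⟩ := (hmem B).mp hB
    obtain ⟨b, rfl⟩ := (hmem B').mp hB'
    exact Finset.disjoint_singleton.mpr fun h => hne (h ▸ rfl)
  have hblσ : ∀ B ∈ Pa, B ∈ σ.clusters := by
    intro B hB
    obtain ⟨a, rfl⟩ := (hmem B).mp hB
    exact σ.singleton_mem a
  have hblτ : ∀ B ∈ Pa, B ∈ τ.clusters := by
    intro B hB
    obtain ⟨a, rfl⟩ := (hmem B).mp hB
    exact τ.singleton_mem a
  have hfine : ∀ K : Finset J, (∃ B ∈ Pa, K ⊆ B) → (K ∈ σ.clusters ↔ K ∈ τ.clusters) := by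
    rintro K ⟨B, hB, hKB⟩
    obtain ⟨a, rfl⟩ := (hmem B).mp hB
    constructor
    · intro h
      rcases Finset.subset_singleton_iff.mp hKB with h' | h'
      · exact absurd h' (σ.nonempty_of_mem K h).ne_empty
      · exact h' ▸ τ.singleton_mem a
    · intro h
      rcases Finset.subset_singleton_iff.mp hKB with h' | h'
      · exact absurd h' (τ.nonempty_of_mem K h).ne_empty
      · exact h' ▸ σ.singleton_mem a
  have hcard : Pa.card ≤ Fintype.card J := by
    rw [hPa, Finset.card_image_of_injective _ (fun a b h => Finset.singleton_injective h)]
    exact le_of_eq (Finset.card_univ)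
  exact BinaryHierarchy.main_induction (Fintype.card J) σ τ Pa hcov hdis hblσ hblτ hfine hcard
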